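/- arXiv:1611.08817 — 5 statements merged into one kernel-verified Lean document; each statement's English description precedes it below -/
import Mathlib

section
/- Let ρ : [0,∞) → ℝ be convex and nondecreasing with ρ(0) = 0 and 0 a strict minimizer (ρ(s) > 0 for s > 0). Let R(u) = Σᵢ ρ(|(∇ₓu)ᵢ|) where ∇ₓ is a first-order difference operator on ℝᴺ, and let E(u) = R(u) + (α/2)‖Au − f‖² with A a linear map, α > 0. If ũ minimizes E with noiseless data f = Aũ, then ũ is a constant vector. -/
open Fin.NatCast

theorem convex_noiseless_recovery_constant (N K : ℕ) [NeZero N] (ρ : ℝ → ℝ)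
    (hconv : ConvexOn ℝ (Set.Ici 0) ρ)
    (hmono : MonotoneOn ρ (Set.Ici 0))
    (hρ0 : ρ 0 = 0) (hpos : ∀ s > (0 : ℝ), 0 < ρ s)
    (α : ℝ) (hα : 0 < α)
    (A : (Fin N → ℝ) →ₗ[ℝ] EuclideanSpace ℝ (Fin K))
    (f : EuclideanSpace ℝ (Fin K))
    (ub : Fin N → ℝ) (hf : f = A ub)
    (E : (Fin N → ℝ) → ℝ)
    (hE : ∀ u, E u =
      (∑ i ∈ Finset.range (N - 1), ρ |u ((i + 1 : ℕ) : Fin N) - u ((i : ℕ) : Fin N)|)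
        + α / 2 * ‖A u - f‖ ^ 2)
    (hmin : ∀ u, E ub ≤ E u) :
    ∃ c : ℝ, ∀ i, ub i = c := by
  classical
  subst hf
  set c : ℝ := ub 0 with hc
  set w : Fin N → ℝ := fun _ => c with hw
  set S : ℝ := ∑ i ∈ Finset.range (N - 1),
      ρ |ub ((i + 1 : ℕ) : Fin N) - ub ((i : ℕ) : Fin N)| with hS
  have hterm_nonneg : ∀ i ∈ Finset.range (N - 1),
      0 ≤ ρ |ub ((i + 1 : ℕ) : Fin N) - ub ((i : ℕ) : Fin N)| := by
    intro i _
    rcases eq_or_lt_of_le (abs_nonneg (ub ((i + 1 : ℕ) : Fin N) - ub ((i : ℕ) : Fin N))) with h | h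
    · rw [← h, hρ0]
    · exact (hpos _ h).le
  have hSnonneg : 0 ≤ S := Finset.sum_nonneg hterm_nonneg
  have hρscale : ∀ s : ℝ, 0 ≤ s → ∀ t : ℝ, 0 ≤ t → t ≤ 1 → ρ (t * s) ≤ t * ρ s := by
    intro s hs t ht ht1
    have h := hconv.2 hs Set.self_mem_Ici ht (by linarith : (0:ℝ) ≤ 1 - t) (by ring)
    simpa [hρ0, smul_eq_mul] using h
  have hEub : E ub = S := by
    rw [hE ub]
    simp [hS]
  set M : ℝ := ‖A w - A ub‖ ^ 2 with hM
  have hMnonneg : 0 ≤ M := sq_nonneg _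
  -- key inequality: for ε ∈ (0,1], ε * S ≤ α/2 * ε^2 * M
  have key : ∀ ε : ℝ, 0 < ε → ε ≤ 1 → S ≤ α / 2 * ε * M := by
    intro ε hε hε1
    set t : ℝ := 1 - ε with hts
    have ht0 : 0 ≤ t := by simp [hts]; linarith
    have ht1 : t ≤ 1 := by simp [hts]; linarith
    set v : Fin N → ℝ := fun i => t * ub i + (1 - t) * c with hv
    have hvsum : (∑ i ∈ Finset.range (N - 1),
        ρ |v ((i + 1 : ℕ) : Fin N) - v ((i : ℕ) : Fin N)|) ≤ t * S := by
      rw [hS, Finset.mul_sum]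
      apply Finset.sum_le_sum
      intro i hi
      have : v ((i + 1 : ℕ) : Fin N) - v ((i : ℕ) : Fin N)
          = t * (ub ((i + 1 : ℕ) : Fin N) - ub ((i : ℕ) : Fin N)) := by
        simp [hv]; ring
      rw [this, abs_mul, abs_of_nonneg ht0]
      exact hρscale _ (abs_nonneg _) t ht0 ht1
    have hveq : v = t • ub + (1 - t) • w := by
      funext i; simp [hv, hw]
    have hAfid : ‖A v - A ub‖ ^ 2 = (1 - t) ^ 2 * M := by
      have : A v - A ub = (1 - t) • (A w - A ub) := by
        rw [hveq, map_add, map_smul, map_smul]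
        module
      rw [this, norm_smul, mul_pow, hM]
      congr 1
      rw [Real.norm_eq_abs, sq_abs]
    have h1 := hmin v
    rw [hEub, hE v, hAfid] at h1
    have h2 : S ≤ t * S + α / 2 * ((1 - t) ^ 2 * M) := le_trans h1 (add_le_add_left hvsum _)
    have hε' : (1 : ℝ) - t = ε := by simp [hts]
    nlinarith [hε, h2]
  have hS0 : S = 0 := by
    have hle : S ≤ 0 := by
      apply le_of_forall_pos_le_add
      intro ε' hε'
      set ε : ℝ := min 1 (ε' / (α / 2 * M + 1)) with hεdef
      have hden : 0 < α / 2 * M + 1 := by positivity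
      have hεpos : 0 < ε := lt_min one_pos (by positivity)
      have hε1 : ε ≤ 1 := min_le_left _ _
      have h := key ε hεpos hε1
      have hε2 : ε ≤ ε' / (α / 2 * M + 1) := min_le_right _ _
      have : α / 2 * ε * M ≤ ε' := by
        have h3 : ε * (α / 2 * M + 1) ≤ ε' := by
          rw [← le_div_iff₀ hden]; exact hε2
        nlinarith [hεpos.le, hMnonneg, hα.le]
      linarith
    linarith
  have hzero : ∀ i ∈ Finset.range (N - 1),
      ρ |ub ((i + 1 : ℕ) : Fin N) - ub ((i : ℕ) : Fin N)| = 0 :=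
    (Finset.sum_eq_zero_iff_of_nonneg hterm_nonneg).1 hS0
  have hdiff : ∀ i, i < N - 1 → ub ((i + 1 : ℕ) : Fin N) = ub ((i : ℕ) : Fin N) := by
    intro i hi
    have h := hzero i (Finset.mem_range.2 hi)
    by_contra hne
    have habs : 0 < |ub ((i + 1 : ℕ) : Fin N) - ub ((i : ℕ) : Fin N)| :=
      abs_pos.2 (sub_ne_zero.2 hne)
    exact absurd h (ne_of_gt (hpos _ habs))
  have claim : ∀ k, k < N → ub ((k : ℕ) : Fin N) = ub 0 := by
    intro k
    induction k with
    | zero => intro _; norm_num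
    | succ n ih =>
      intro hk
      have hn : n < N - 1 := by omega
      rw [hdiff n hn]
      exact ih (by omega)
  refine ⟨ub 0, fun i => ?_⟩
  have := claim i.val i.isLt
  rwa [Fin.cast_val_eq_self] at this
end

section
/- Let ρ : [0,∞) → ℝ be nondecreasing with ρ(0) = 0, ρ(s) > 0 for s > 0, and suppose the left derivative ρ'(Ū⁻) exists and is strictly positive for a fixed Ū > 0. Let N = 3M and define the gate signal u̲ ∈ ℝᴺ by u̲ᵢ = Ū for M+1 ≤ i ≤ 2M and u̲ᵢ = 0 otherwise, and let f = Au̲. Define E(u) = Σᵢ ρ(|u_{i+1} − uᵢ|) + (α/2)‖Au − f‖² with α > 0 and A linear. Then there exists u with strictly lower edge contrast than u̲ (namely uᵉ with uᵉᵢ = ε off the middle block and Ū − ε on it, for some small ε > 0) such that E(u) < E(u̲). -/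
open Fin.NatCast

open Filter Set Topology

lemma sum_jumps (M : ℕ) (hM : 0 < M) [NeZero (3 * M)] (ρ : ℝ → ℝ) (hρ0 : ρ 0 = 0)
    (a b : ℝ) :
    (∑ i ∈ Finset.range (3 * M - 1),
      ρ |(fun j : Fin (3 * M) => if M ≤ (j : ℕ) ∧ (j : ℕ) < 2 * M then a else b)
            ((i + 1 : ℕ) : Fin (3 * M)) -
          (fun j : Fin (3 * M) => if M ≤ (j : ℕ) ∧ (j : ℕ) < 2 * M then a else b)
            ((i : ℕ) : Fin (3 * M))|) = ρ |a - b| + ρ |b - a| := by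
  have hrw : ∀ i ∈ Finset.range (3 * M - 1),
      ρ |(fun j : Fin (3 * M) => if M ≤ (j : ℕ) ∧ (j : ℕ) < 2 * M then a else b)
            ((i + 1 : ℕ) : Fin (3 * M)) -
          (fun j : Fin (3 * M) => if M ≤ (j : ℕ) ∧ (j : ℕ) < 2 * M then a else b)
            ((i : ℕ) : Fin (3 * M))| =
        ρ |(if M ≤ i + 1 ∧ i + 1 < 2 * M then a else b) -
           (if M ≤ i ∧ i < 2 * M then a else b)| := by
    intro i hi
    simp only [Finset.mem_range] at hi
    have h1 : (((i : ℕ) : Fin (3 * M)) : ℕ) = i := Fin.val_cast_of_lt (by omega)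
    have h2 : (((i + 1 : ℕ) : Fin (3 * M)) : ℕ) = i + 1 := Fin.val_cast_of_lt (by omega)
    simp only [h1, h2]
  rw [Finset.sum_congr rfl hrw]
  have hsub : ({M - 1, 2 * M - 1} : Finset ℕ) ⊆ Finset.range (3 * M - 1) := by
    intro x hx
    simp only [Finset.mem_insert, Finset.mem_singleton] at hx
    simp only [Finset.mem_range]
    omega
  rw [← Finset.sum_subset hsub]
  · have hne : (M - 1) ≠ 2 * M - 1 := by omega
    rw [Finset.sum_pair hne]
    have c1 : M ≤ (M - 1) + 1 ∧ (M - 1) + 1 < 2 * M := by omega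
    have c2 : ¬(M ≤ M - 1 ∧ M - 1 < 2 * M) := by omega
    have c3 : ¬(M ≤ (2 * M - 1) + 1 ∧ (2 * M - 1) + 1 < 2 * M) := by omega
    have c4 : M ≤ 2 * M - 1 ∧ 2 * M - 1 < 2 * M := by omega
    rw [if_pos c1, if_neg c2, if_neg c3, if_pos c4]
  · intro i hi hni
    simp only [Finset.mem_range] at hi
    simp only [Finset.mem_insert, Finset.mem_singleton] at hni
    have hiff : (M ≤ i + 1 ∧ i + 1 < 2 * M) ↔ (M ≤ i ∧ i < 2 * M) := by omega
    by_cases h : M ≤ i ∧ i < 2 * M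
    · rw [if_pos h, if_pos (hiff.mpr h), sub_self, abs_zero, hρ0]
    · rw [if_neg h, if_neg (fun hh => h (hiff.mp hh)), sub_self, abs_zero, hρ0]

theorem exists_lower_contrast_with_smaller_energy (M K : ℕ) (hM : 0 < M) [NeZero (3 * M)]
    (ρ : ℝ → ℝ) (U α : ℝ) (hU : 0 < U) (hα : 0 < α)
    (hρ0 : ρ 0 = 0)
    (hmono : MonotoneOn ρ (Set.Ici 0))
    (hpos : ∀ s > (0 : ℝ), 0 < ρ s)
    (dL : ℝ) (hdL : 0 < dL)
    (hleft : HasDerivWithinAt ρ dL (Set.Iic U) U)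
    (A : (Fin (3 * M) → ℝ) →ₗ[ℝ] EuclideanSpace ℝ (Fin K))
    (ub : Fin (3 * M) → ℝ)
    (hub : ub = fun i : Fin (3 * M) => if M ≤ (i : ℕ) ∧ (i : ℕ) < 2 * M then U else 0)
    (f : EuclideanSpace ℝ (Fin K)) (hf : f = A ub)
    (E : (Fin (3 * M) → ℝ) → ℝ)
    (hE : ∀ u, E u =
      (∑ i ∈ Finset.range (3 * M - 1),
        ρ |u ((i + 1 : ℕ) : Fin (3 * M)) - u ((i : ℕ) : Fin (3 * M))|)
        + α / 2 * ‖A u - f‖ ^ 2) :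
    ∃ ε > (0 : ℝ),
      E (fun i : Fin (3 * M) => if M ≤ (i : ℕ) ∧ (i : ℕ) < 2 * M then U - ε else ε) < E ub := by
  subst hf
  set d : Fin (3 * M) → ℝ := fun j => if M ≤ (j : ℕ) ∧ (j : ℕ) < 2 * M then (-1 : ℝ) else 1
    with hd
  set C : ℝ := α / 2 * ‖A d‖ ^ 2 with hC
  have hC0 : 0 ≤ C := by positivity
  -- derivative of the perturbed energy gap
  have hg : HasDerivWithinAt (fun ε : ℝ => U - 2 * ε) (-2) (Set.Ici 0) 0 := by
    have h := ((hasDerivAt_id (0 : ℝ)).const_mul 2).const_sub U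
    simpa using h.hasDerivWithinAt
  have hmaps : Set.MapsTo (fun ε : ℝ => U - 2 * ε) (Set.Ici 0) (Set.Iic U) := by
    intro x hx
    simp only [Set.mem_Iic]
    have : (0 : ℝ) ≤ x := hx
    linarith
  have hcomp : HasDerivWithinAt (fun ε : ℝ => ρ (U - 2 * ε)) (dL * (-2)) (Set.Ici 0) 0 := by
    have hleft' : HasDerivWithinAt ρ dL (Set.Iic ((fun ε : ℝ => U - 2 * ε) 0))
        ((fun ε : ℝ => U - 2 * ε) 0) := by simpa using hleft
    exact HasDerivWithinAt.comp (0 : ℝ) hleft' hg (by simpa using hmaps)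
  set F : ℝ → ℝ := fun ε => 2 * (ρ (U - 2 * ε) - ρ U) + C * ε ^ 2 with hFdef
  have hF : HasDerivWithinAt F (2 * (dL * (-2)) + C * (↑2 * (0 : ℝ) ^ (2 - 1))) (Set.Ici 0) 0 :=
    ((hcomp.sub_const _).const_mul 2).add
      (((hasDerivAt_pow 2 (0 : ℝ)).hasDerivWithinAt).const_mul C)
  have hF' : (2 * (dL * (-2)) + C * (↑2 * (0 : ℝ) ^ (2 - 1))) < 0 := by
    norm_num; linarith
  rw [hasDerivWithinAt_iff_tendsto_slope] at hF
  have hd0 : Set.Ici (0 : ℝ) \ {0} = Set.Ioi 0 := by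
    ext x
    simp only [Set.mem_diff, Set.mem_Ici, Set.mem_singleton_iff, Set.mem_Ioi]
    constructor
    · rintro ⟨h1, h2⟩; exact lt_of_le_of_ne h1 (Ne.symm h2)
    · intro h; exact ⟨le_of_lt h, ne_of_gt h⟩
  rw [hd0] at hF
  have hlt : ∀ᶠ ε in 𝓝[>] (0 : ℝ), slope F 0 ε < 0 := hF.eventually_lt_const hF'
  have hsmall : ∀ᶠ ε in 𝓝[>] (0 : ℝ), ε < U / 2 :=
    eventually_nhdsWithin_of_eventually_nhds (eventually_lt_nhds (by linarith))
  have hmem : ∀ᶠ ε in 𝓝[>] (0 : ℝ), ε ∈ Set.Ioi (0 : ℝ) := eventually_mem_nhdsWithin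
  obtain ⟨ε, hεmem, hεU, hslope⟩ := (hmem.and (hsmall.and hlt)).exists
  have hεpos : (0 : ℝ) < ε := hεmem
  have hF0 : F 0 = 0 := by simp [hFdef]
  have hFε : F ε < 0 := by
    rw [slope_def_field, hF0, sub_zero, sub_zero, div_neg_iff] at hslope
    rcases hslope with ⟨h1, h2⟩ | ⟨h1, h2⟩
    · linarith
    · exact h1
  refine ⟨ε, hεpos, ?_⟩
  -- energies
  have Eub : E ub = ρ U + ρ U := by
    rw [hE, hub, sum_jumps M hM ρ hρ0 U 0]
    simp [abs_of_pos hU, abs_sub_comm (0 : ℝ) U]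
  have hweq : (fun i : Fin (3 * M) => if M ≤ (i : ℕ) ∧ (i : ℕ) < 2 * M then U - ε else ε)
      = ub + ε • d := by
    funext j
    by_cases h : M ≤ (j : ℕ) ∧ (j : ℕ) < 2 * M
    · simp only [hub, hd, if_pos h, Pi.add_apply, Pi.smul_apply, smul_eq_mul]
      ring
    · simp only [hub, hd, if_neg h, Pi.add_apply, Pi.smul_apply, smul_eq_mul]
      ring
  have hAdiff : A (fun i : Fin (3 * M) => if M ≤ (i : ℕ) ∧ (i : ℕ) < 2 * M then U - ε else ε)
      - A ub = ε • A d := by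
    rw [hweq, map_add, map_smul]
    abel
  have habs1 : |(U - ε) - ε| = U - 2 * ε := by
    rw [abs_of_pos (by linarith)]
    ring
  have habs2 : |ε - (U - ε)| = U - 2 * ε := by
    rw [abs_sub_comm, habs1]
  have hnorm : ‖(ε • A d : EuclideanSpace ℝ (Fin K))‖ ^ 2 = ε ^ 2 * ‖A d‖ ^ 2 := by
    rw [norm_smul, mul_pow]
    congr 1
    rw [Real.norm_eq_abs, abs_of_pos hεpos]
  have Ew : E (fun i : Fin (3 * M) => if M ≤ (i : ℕ) ∧ (i : ℕ) < 2 * M then U - ε else ε)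
      = ρ (U - 2 * ε) + ρ (U - 2 * ε) + C * ε ^ 2 := by
    rw [hE, sum_jumps M hM ρ hρ0 (U - ε) ε, habs1, habs2, hAdiff, hnorm, hC]
    ring
  have hFε' : 2 * (ρ (U - 2 * ε) - ρ U) + C * ε ^ 2 < 0 := hFε
  rw [Ew, Eub]
  linarith
end

section
/- Under the setup of the gate signal u̲ with noiseless data f = Au̲: if ρ is nondecreasing with ρ(0)=0 and the right derivative ρ'(Ū⁺) > 0 exists, then any u whose two jump magnitudes satisfy |u_{M+1}−u_M| ≥ Ū and |u_{2M+1}−u_{2M}| ≥ Ū with at least one strict inequality has E(u) > E(u̲). -/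
lemma rho_strict_aux (ρ : ℝ → ℝ) (U dR a : ℝ) (hU : 0 < U) (hdR : 0 < dR)
    (hmono : MonotoneOn ρ (Set.Ici 0))
    (hright : HasDerivWithinAt ρ dR (Set.Ici U) U) (ha : U < a) : ρ U < ρ a := by
  have h := hasDerivWithinAt_iff_tendsto_slope.mp hright
  have hs : Set.Ici U \ {U} = Set.Ioi U := by
    ext x
    simp only [Set.mem_diff, Set.mem_Ici, Set.mem_singleton_iff, Set.mem_Ioi]
    constructor
    · rintro ⟨h1, h2⟩; exact lt_of_le_of_ne h1 (Ne.symm h2)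
    · intro h; exact ⟨le_of_lt h, ne_of_gt h⟩
  rw [hs] at h
  have hev : ∀ᶠ y in nhdsWithin U (Set.Ioi U), slope ρ U y ∈ Set.Ioi 0 :=
    h (Ioi_mem_nhds hdR)
  have hlt : ∀ᶠ y in nhdsWithin U (Set.Ioi U), y < a :=
    eventually_nhdsWithin_of_eventually_nhds (eventually_lt_nhds ha)
  have hmem : ∀ᶠ y in nhdsWithin U (Set.Ioi U), y ∈ Set.Ioi U := self_mem_nhdsWithin
  obtain ⟨y, h1, h2, h3⟩ := (hev.and (hlt.and hmem)).exists
  have hyU : U < y := h3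
  have hslope : 0 < (ρ y - ρ U) / (y - U) := by
    have := h1; rwa [Set.mem_Ioi, slope_def_field] at this
  have hnum : ρ U < ρ y := by
    rcases div_pos_iff.mp hslope with ⟨h4, _⟩ | ⟨_, h5⟩
    · linarith
    · linarith
  have : ρ y ≤ ρ a := hmono (Set.mem_Ici.mpr (by linarith)) (Set.mem_Ici.mpr (by linarith)) h2.le
  linarith

open Fin.NatCast in
theorem higher_contrast_has_larger_energy (M K : ℕ) (hM : 0 < M) [NeZero (3 * M)]
    (ρ : ℝ → ℝ) (U α : ℝ) (hU : 0 < U) (hα : 0 < α)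
    (hρ0 : ρ 0 = 0)
    (hmono : MonotoneOn ρ (Set.Ici 0))
    (dR : ℝ) (hdR : 0 < dR)
    (hright : HasDerivWithinAt ρ dR (Set.Ici U) U)
    (A : (Fin (3 * M) → ℝ) →ₗ[ℝ] EuclideanSpace ℝ (Fin K))
    (ub : Fin (3 * M) → ℝ)
    (hub : ub = fun i : Fin (3 * M) => if M ≤ (i : ℕ) ∧ (i : ℕ) < 2 * M then U else 0)
    (f : EuclideanSpace ℝ (Fin K)) (hf : f = A ub)
    (E : (Fin (3 * M) → ℝ) → ℝ)
    (hE : ∀ u, E u =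
      (∑ i ∈ Finset.range (3 * M - 1),
        ρ |u ((i + 1 : ℕ) : Fin (3 * M)) - u ((i : ℕ) : Fin (3 * M))|)
        + α / 2 * ‖A u - f‖ ^ 2) :
    ∀ u : Fin (3 * M) → ℝ,
      U ≤ |u ((M : ℕ) : Fin (3 * M)) - u ((M - 1 : ℕ) : Fin (3 * M))| →
      U ≤ |u ((2 * M : ℕ) : Fin (3 * M)) - u ((2 * M - 1 : ℕ) : Fin (3 * M))| →
      (U < |u ((M : ℕ) : Fin (3 * M)) - u ((M - 1 : ℕ) : Fin (3 * M))| ∨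
       U < |u ((2 * M : ℕ) : Fin (3 * M)) - u ((2 * M - 1 : ℕ) : Fin (3 * M))|) →
      E ub < E u := by
  intro u h1 h2 hstrict
  have hρnn : ∀ x : ℝ, 0 ≤ x → 0 ≤ ρ x := by
    intro x hx
    calc (0:ℝ) = ρ 0 := hρ0.symm
    _ ≤ ρ x := hmono (Set.mem_Ici.mpr le_rfl) (Set.mem_Ici.mpr hx) hx
  -- value of ub at a natural index j < 3M
  have hval : ∀ j : ℕ, j < 3 * M →
      ub ((j : ℕ) : Fin (3 * M)) = if M ≤ j ∧ j < 2 * M then U else 0 := by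
    intro j hj
    rw [hub]
    simp only [Fin.val_natCast, Nat.mod_eq_of_lt hj]
  -- the jump amounts for ub
  have hjump : ∀ i ∈ Finset.range (3 * M - 1),
      ρ |ub ((i + 1 : ℕ) : Fin (3 * M)) - ub ((i : ℕ) : Fin (3 * M))| =
      (if i = M - 1 then ρ U else 0) + (if i = 2 * M - 1 then ρ U else 0) := by
    intro i hi
    rw [Finset.mem_range] at hi
    rw [hval (i+1) (by omega), hval i (by omega)]
    rcases Nat.lt_or_ge i (M - 1) with h | h
    · rw [if_neg (by omega), if_neg (by omega), if_neg (by omega), if_neg (by omega)]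
      simp [hρ0]
    rcases Nat.eq_or_lt_of_le h with h' | h'
    · rw [if_pos (by omega), if_neg (by omega), if_pos h'.symm, if_neg (by omega)]
      simp [hρ0, abs_of_pos hU]
    rcases Nat.lt_or_ge i (2 * M - 1) with h'' | h''
    · rw [if_pos (by omega), if_pos (by omega), if_neg (by omega), if_neg (by omega)]
      simp [hρ0]
    rcases Nat.eq_or_lt_of_le h'' with h3 | h3
    · rw [if_neg (by omega), if_pos (by omega), if_neg (by omega), if_pos h3.symm]
      simp [hρ0, abs_of_pos hU]
    · rw [if_neg (by omega), if_neg (by omega), if_neg (by omega), if_neg (by omega)]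
      simp [hρ0]
  have hmem1 : M - 1 ∈ Finset.range (3 * M - 1) := Finset.mem_range.mpr (by omega)
  have hmem2 : 2 * M - 1 ∈ Finset.range (3 * M - 1) := Finset.mem_range.mpr (by omega)
  have hne : M - 1 ≠ 2 * M - 1 := by omega
  -- E ub = 2 ρ U
  have hEub : E ub = ρ U + ρ U := by
    rw [hE ub, hf, sub_self, norm_zero]
    rw [Finset.sum_congr rfl hjump, Finset.sum_add_distrib,
      Finset.sum_ite_eq' _ _ (fun _ => ρ U), Finset.sum_ite_eq' _ _ (fun _ => ρ U),
      if_pos hmem1, if_pos hmem2]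
    ring
  -- lower bound on the sum for u
  set g : ℕ → ℝ := fun i =>
    ρ |u ((i + 1 : ℕ) : Fin (3 * M)) - u ((i : ℕ) : Fin (3 * M))| with hg
  have hMsucc : M - 1 + 1 = M := by omega
  have h2Msucc : 2 * M - 1 + 1 = 2 * M := by omega
  have hg1 : g (M - 1) = ρ |u ((M : ℕ) : Fin (3 * M)) - u ((M - 1 : ℕ) : Fin (3 * M))| := by
    rw [hg]; simp only []; rw [hMsucc]
  have hg2 : g (2 * M - 1) =
      ρ |u ((2 * M : ℕ) : Fin (3 * M)) - u ((2 * M - 1 : ℕ) : Fin (3 * M))| := by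
    rw [hg]; simp only []; rw [h2Msucc]
  have hlb : g (M - 1) + g (2 * M - 1) ≤ ∑ i ∈ Finset.range (3 * M - 1), g i := by
    have := Finset.sum_le_sum (s := Finset.range (3 * M - 1))
      (f := fun i => (if i = M - 1 then g (M-1) else 0) + (if i = 2 * M - 1 then g (2*M-1) else 0))
      (g := g) ?_
    · rwa [Finset.sum_add_distrib, Finset.sum_ite_eq' _ _ (fun _ => g (M-1)),
        Finset.sum_ite_eq' _ _ (fun _ => g (2*M-1)), if_pos hmem1, if_pos hmem2] at this
    · intro i _
      rcases eq_or_ne i (M - 1) with rfl | hi1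
      · rw [if_pos rfl, if_neg hne]; simp
      rcases eq_or_ne i (2 * M - 1) with rfl | hi2
      · rw [if_neg hi1, if_pos rfl]; simp
      · rw [if_neg hi1, if_neg hi2]
        simpa using hρnn _ (abs_nonneg _)
  have hnn : 0 ≤ α / 2 * ‖A u - f‖ ^ 2 := by positivity
  -- strict comparison of the two jump terms
  have hle1 : ρ U ≤ g (M - 1) := by
    rw [hg1]
    exact hmono (Set.mem_Ici.mpr hU.le) (Set.mem_Ici.mpr (abs_nonneg _)) h1
  have hle2 : ρ U ≤ g (2 * M - 1) := by
    rw [hg2]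
    exact hmono (Set.mem_Ici.mpr hU.le) (Set.mem_Ici.mpr (abs_nonneg _)) h2
  have hstrict' : ρ U + ρ U < g (M - 1) + g (2 * M - 1) := by
    rcases hstrict with hs | hs
    · have : ρ U < g (M - 1) := by
        rw [hg1]; exact rho_strict_aux ρ U dR _ hU hdR hmono hright hs
      linarith
    · have : ρ U < g (2 * M - 1) := by
        rw [hg2]; exact rho_strict_aux ρ U dR _ hU hdR hmono hright hs
      linarith
  have hEu : E u = (∑ i ∈ Finset.range (3 * M - 1), g i) + α / 2 * ‖A u - f‖ ^ 2 := hE u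
  rw [hEub, hEu]
  linarith
end

section
/- Let T(s) = ρ(min(s,τ)) be a truncated regularizer with ρ nondecreasing, ρ(0)=0, ρ(s)>0 for s>0, and τ > 0. Let Ω be a nonempty proper subset of {1,…,N}, 1_Ω its indicator vector, ζ > 0, J₁ = {i : (∇ₓ1_Ω)ᵢ ≠ 0}, and E^ζ(u) = Σᵢ T(|(∇ₓu)ᵢ|) + (α/2)‖A(u − ζ1_Ω)‖². If A^T A has minimal eigenvalue μ_min > 0 and ζ > τ + sqrt(4T(τ)·#J₁/(α·μ_min)), then ζ1_Ω is the unique global minimizer of E^ζ. -/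
open scoped Classical
open Fin.NatCast

set_option maxHeartbeats 1000000 in
theorem truncated_regularization_perfect_recovery (N K : ℕ) [NeZero N]
    (ρ : ℝ → ℝ) (τ : ℝ) (hτ : 0 < τ)
    (hρ0 : ρ 0 = 0)
    (hmono : MonotoneOn ρ (Set.Ici 0))
    (hpos : ∀ s > (0 : ℝ), 0 < ρ s)
    (Ω : Finset (Fin N)) (hΩ1 : Ω.Nonempty) (hΩ2 : Ω ≠ Finset.univ)
    (ζ α μ : ℝ) (hζ0 : 0 < ζ) (hα : 0 < α) (hμ : 0 < μ)
    (A : (Fin N → ℝ) →ₗ[ℝ] EuclideanSpace ℝ (Fin K))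
    (hμmin : ∀ u : Fin N → ℝ, μ * ∑ i, (u i) ^ 2 ≤ ‖A u‖ ^ 2)
    (g : Fin N → ℝ) (hg : g = fun i => if i ∈ Ω then ζ else 0)
    (J1 : Finset ℕ)
    (hJ1 : J1 = (Finset.range (N - 1)).filter
      (fun i => g ((i + 1 : ℕ) : Fin N) ≠ g ((i : ℕ) : Fin N)))
    (hζ : ζ > τ + Real.sqrt (4 * ρ τ * J1.card / (α * μ)))
    (E : (Fin N → ℝ) → ℝ)
    (hE : ∀ u, E u =
      (∑ i ∈ Finset.range (N - 1),
        ρ (min |u ((i + 1 : ℕ) : Fin N) - u ((i : ℕ) : Fin N)| τ))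
        + α / 2 * ‖A (u - g)‖ ^ 2) :
    ∀ u : Fin N → ℝ, u ≠ g → E g < E u := by
  have hsq0 : (0:ℝ) ≤ Real.sqrt (4 * ρ τ * J1.card / (α * μ)) := Real.sqrt_nonneg _
  have hζτ : τ < ζ := by linarith
  have hρτ : 0 < ρ τ := hpos τ hτ
  have hρnn : ∀ s : ℝ, 0 ≤ s → 0 ≤ ρ s := by
    intro s hs
    have := hmono (Set.mem_Ici.mpr le_rfl) (Set.mem_Ici.mpr hs) hs
    linarith [hρ0 ▸ this]
  have hgval : ∀ j : Fin N, g j = 0 ∨ g j = ζ := by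
    intro j; rw [hg]; dsimp only; split <;> simp
  -- each g-difference on J1 has absolute value ζ
  have hgdiff : ∀ a b : Fin N, g a ≠ g b → |g a - g b| = ζ := by
    intro a b hab
    rcases hgval a with h1 | h1 <;> rcases hgval b with h2 | h2 <;>
      rw [h1, h2] at hab ⊢
    · exact absurd rfl hab
    · rw [zero_sub, abs_neg, abs_of_pos hζ0]
    · rw [sub_zero, abs_of_pos hζ0]
    · exact absurd rfl hab
  set C : ℝ := (J1.card : ℝ) * ρ τ with hC
  have hCnn : 0 ≤ C := by positivity
  -- value at g
  have hEg : E g = C := by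
    rw [hE g]
    have h0 : A (g - g) = 0 := by rw [sub_self, map_zero]
    rw [h0, norm_zero]
    have hsum : ∀ i ∈ Finset.range (N - 1),
        ρ (min |g ((i + 1 : ℕ) : Fin N) - g ((i : ℕ) : Fin N)| τ)
        = if g ((i + 1 : ℕ) : Fin N) ≠ g ((i : ℕ) : Fin N) then ρ τ else 0 := by
      intro i _
      by_cases hne : g ((i + 1 : ℕ) : Fin N) ≠ g ((i : ℕ) : Fin N)
      · rw [if_pos hne, hgdiff _ _ hne, min_eq_right hζτ.le]
      · rw [if_neg hne]
        push_neg at hne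
        rw [hne, sub_self, abs_zero, min_eq_left hτ.le, hρ0]
    rw [Finset.sum_congr rfl hsum, ← Finset.sum_filter, ← hJ1, Finset.sum_const,
      nsmul_eq_mul]
    ring
  -- sqrt inequality squared
  have harg : (0:ℝ) ≤ 4 * ρ τ * J1.card / (α * μ) := by positivity
  have hsq : 4 * ρ τ * J1.card / (α * μ) < (ζ - τ) ^ 2 := by
    have h1 : Real.sqrt (4 * ρ τ * J1.card / (α * μ)) < ζ - τ := by linarith
    calc 4 * ρ τ * J1.card / (α * μ)
        = Real.sqrt (4 * ρ τ * J1.card / (α * μ)) ^ 2 := (Real.sq_sqrt harg).symm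
      _ < (ζ - τ) ^ 2 := by nlinarith
  have hsq' : 4 * C < (ζ - τ) ^ 2 * (α * μ) := by
    have := (div_lt_iff₀ (by positivity : (0:ℝ) < α * μ)).mp hsq
    rw [hC]; nlinarith
  intro u hu
  set d : Fin N → ℝ := fun j => u j - g j with hd
  set S : ℝ := ∑ j, d j ^ 2 with hS
  set D : ℝ := ‖A (u - g)‖ ^ 2 with hD
  have hμS : μ * S ≤ D := by
    have h := hμmin (u - g)
    have he : ∀ j, (u - g) j = d j := fun j => rfl
    simp only [he] at h
    exact h
  have hSpos : 0 < S := by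
    obtain ⟨j, hj⟩ := Function.ne_iff.mp hu
    have h1 : d j ^ 2 ≤ S := by
      apply Finset.single_le_sum (fun i _ => sq_nonneg (d i)) (Finset.mem_univ j)
    have hdj : d j ≠ 0 := sub_ne_zero.mpr hj
    have : 0 < d j ^ 2 := by positivity
    linarith
  have hDpos : 0 < D := lt_of_lt_of_le (by nlinarith) hμS
  -- nonnegativity of each regularizer term for u
  have hterm_nn : ∀ i ∈ Finset.range (N - 1),
      0 ≤ ρ (min |u ((i + 1 : ℕ) : Fin N) - u ((i : ℕ) : Fin N)| τ) := by
    intro i _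
    exact hρnn _ (le_min (abs_nonneg _) hτ.le)
  rw [hEg, hE u, ← hD]
  by_cases hcase : α / 2 * D ≤ C
  · -- small data-fidelity case: all jumps survive
    have hSle : α * μ * S ≤ 2 * C := by nlinarith
    have hkey : ∀ i ∈ J1,
        ρ (min |u ((i + 1 : ℕ) : Fin N) - u ((i : ℕ) : Fin N)| τ) = ρ τ := by
      intro i hi
      rw [hJ1, Finset.mem_filter, Finset.mem_range] at hi
      obtain ⟨hilt, hgne⟩ := hi
      set a : Fin N := ((i + 1 : ℕ) : Fin N) with ha
      set b : Fin N := ((i : ℕ) : Fin N) with hb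
      have hN1 : 1 ≤ N := Nat.one_le_iff_ne_zero.mpr (NeZero.ne N)
      have hi1 : i + 1 < N := by omega
      have hi0 : i < N := by omega
      have hav : (a : ℕ) = i + 1 := Fin.val_cast_of_lt hi1
      have hbv : (b : ℕ) = i := Fin.val_cast_of_lt hi0
      have hab : a ≠ b := by
        intro h
        rw [h] at hav
        omega
      have h2 : d a ^ 2 + d b ^ 2 ≤ S := by
        have : d a ^ 2 + d b ^ 2 = ∑ j ∈ ({a, b} : Finset (Fin N)), d j ^ 2 := by
          rw [Finset.sum_pair hab]
        rw [this, hS]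
        exact Finset.sum_le_sum_of_subset_of_nonneg (Finset.subset_univ _)
          (fun j _ _ => sq_nonneg _)
      have h3 : (|d a| + |d b|) ^ 2 ≤ 2 * S := by
        nlinarith [sq_nonneg (|d a| - |d b|), sq_abs (d a), sq_abs (d b)]
      have h4 : α * μ * (|d a| + |d b|) ^ 2 ≤ 4 * C := by nlinarith
      have h5 : (|d a| + |d b|) ^ 2 < (ζ - τ) ^ 2 := by nlinarith
      have h6 : |d a| + |d b| < ζ - τ := by
        nlinarith [abs_nonneg (d a), abs_nonneg (d b)]
      have hgab : |g a - g b| = ζ := hgdiff a b hgne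
      have h7 : τ < |u a - u b| := by
        have h9 := abs_sub_abs_le_abs_sub (g a - g b) (u a - u b)
        have h8 : |(g a - g b) - (u a - u b)| ≤ |d a| + |d b| := by
          have heq : (g a - g b) - (u a - u b) = -(d a) + d b := by
            simp only [hd]; ring
          rw [heq]
          calc |(-(d a) + d b)| ≤ |(-(d a))| + |d b| := abs_add_le _ _
            _ = |d a| + |d b| := by rw [abs_neg]
        rw [hgab] at h9
        linarith
      rw [min_eq_right h7.le]
    have hlb : C ≤ ∑ i ∈ Finset.range (N - 1),
        ρ (min |u ((i + 1 : ℕ) : Fin N) - u ((i : ℕ) : Fin N)| τ) := by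
      have hJsub : J1 ⊆ Finset.range (N - 1) := by
        rw [hJ1]; exact Finset.filter_subset _ _
      calc C = ∑ _i ∈ J1, ρ τ := by rw [Finset.sum_const, nsmul_eq_mul]
        _ = ∑ i ∈ J1, ρ (min |u ((i + 1 : ℕ) : Fin N) - u ((i : ℕ) : Fin N)| τ) :=
            (Finset.sum_congr rfl hkey).symm
        _ ≤ _ := Finset.sum_le_sum_of_subset_of_nonneg hJsub
            (fun i hi _ => hterm_nn i hi)
    have : 0 < α / 2 * D := by positivity
    linarith
  · push_neg at hcase
    have h0 : 0 ≤ ∑ i ∈ Finset.range (N - 1),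
        ρ (min |u ((i + 1 : ℕ) : Fin N) - u ((i : ℕ) : Fin N)| τ) :=
      Finset.sum_nonneg hterm_nn
    linarith
end

section
/- Under the assumptions of the truncated-regularization 1D model with A^T A = diag(d₁,…,d_N), dᵢ > 0, data ζ1_Ω with ζ > 0, and a subadditive nondecreasing regularizer T with T(0)=0 and T(s)>0 for s>0: any global minimizer v of E^ζ(u) = Σᵢ T(|(∇ₓu)ᵢ|) + (α/2)‖A(u − ζ1_Ω)‖² satisfies the extremum principle 0 ≤ vᵢ ≤ ζ for all i. -/
lemma clamp_lip (ζ a b : ℝ) : |max 0 (min a ζ) - max 0 (min b ζ)| ≤ |a - b| := by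
  calc |max 0 (min a ζ) - max 0 (min b ζ)| ≤ |min a ζ - min b ζ| := by
        simpa [max_comm] using abs_max_sub_max_le_abs (min a ζ) (min b ζ) 0
    _ ≤ |a - b| := by
        simpa [abs_sub_comm] using abs_min_sub_min_le_max a ζ b ζ |>.trans (by simp [abs_nonneg])

lemma clamp_closer (ζ a g : ℝ) (h0 : 0 ≤ g) (h1 : g ≤ ζ) :
    (max 0 (min a ζ) - g) ^ 2 ≤ (a - g) ^ 2 := by
  rcases le_total a 0 with h | h
  · rw [min_eq_left (h.trans (h0.trans h1)), max_eq_left h]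
    nlinarith
  · rcases le_total a ζ with h2 | h2
    · rw [min_eq_left h2, max_eq_right h]
    · rw [min_eq_right h2, max_eq_right (le_trans h0 h1)]
      nlinarith

lemma clamp_strict (ζ a g : ℝ) (h0 : 0 ≤ g) (h1 : g ≤ ζ)
    (ha : a < 0 ∨ ζ < a) : (max 0 (min a ζ) - g) ^ 2 < (a - g) ^ 2 := by
  rcases ha with h | h
  · rw [min_eq_left (h.le.trans (h0.trans h1)), max_eq_left h.le]
    nlinarith
  · rw [min_eq_right h.le, max_eq_right (h0.trans h1)]
    nlinarith

theorem truncated_regularization_extremum_principle (N : ℕ) [NeZero N]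
    (T : ℝ → ℝ)
    (hT0 : T 0 = 0)
    (hmono : MonotoneOn T (Set.Ici 0))
    (hpos : ∀ s > (0 : ℝ), 0 < T s)
    (hsub : ∀ a b : ℝ, 0 ≤ a → 0 ≤ b → T (a + b) ≤ T a + T b)
    (Ω : Finset (Fin N)) (hΩ1 : Ω.Nonempty) (hΩ2 : Ω ≠ Finset.univ)
    (ζ α : ℝ) (hζ : 0 < ζ) (hα : 0 < α)
    (d : Fin N → ℝ) (hd : ∀ i, 0 < d i)
    (g : Fin N → ℝ) (hg : g = fun i => if i ∈ Ω then ζ else 0)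
    (E : (Fin N → ℝ) → ℝ)
    (hE : ∀ u, E u =
      (∑ i ∈ Finset.range (N - 1), T |u (Fin.ofNat N (i + 1 : ℕ)) - u (Fin.ofNat N (i : ℕ))|)
        + α / 2 * ∑ i, d i * (u i - g i) ^ 2)
    (v : Fin N → ℝ) (hv : ∀ u, E v ≤ E u) :
    ∀ i, 0 ≤ v i ∧ v i ≤ ζ := by
  intro i
  by_contra hcon
  have hcon' : v i < 0 ∨ ζ < v i := by
    by_contra h
    push_neg at h
    exact hcon h
  set w : Fin N → ℝ := fun j => max 0 (min (v j) ζ) with hwdef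
  have hgb : ∀ j, 0 ≤ g j ∧ g j ≤ ζ := by
    intro j; rw [hg]; dsimp only
    split_ifs <;> constructor <;> first | exact le_refl _ | exact hζ.le
  have hterm1 : ∀ k, T |w (Fin.ofNat N (k + 1 : ℕ)) - w (Fin.ofNat N (k : ℕ))| ≤
      T |v (Fin.ofNat N (k + 1 : ℕ)) - v (Fin.ofNat N (k : ℕ))| := by
    intro k
    exact hmono (Set.mem_Ici.mpr (abs_nonneg _)) (Set.mem_Ici.mpr (abs_nonneg _)) (clamp_lip ζ _ _)
  have hterm2 : ∀ j, d j * (w j - g j) ^ 2 ≤ d j * (v j - g j) ^ 2 := by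
    intro j
    exact mul_le_mul_of_nonneg_left (clamp_closer ζ (v j) (g j) (hgb j).1 (hgb j).2) (hd j).le
  have hstrict : d i * (w i - g i) ^ 2 < d i * (v i - g i) ^ 2 :=
    mul_lt_mul_of_pos_left (clamp_strict ζ (v i) (g i) (hgb i).1 (hgb i).2 hcon') (hd i)
  have hlt : E w < E v := by
    rw [hE w, hE v]
    have h1 : (∑ k ∈ Finset.range (N - 1), T |w (Fin.ofNat N (k + 1 : ℕ)) - w (Fin.ofNat N (k : ℕ))|)
        ≤ ∑ k ∈ Finset.range (N - 1), T |v (Fin.ofNat N (k + 1 : ℕ)) - v (Fin.ofNat N (k : ℕ))| :=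
      Finset.sum_le_sum fun k _ => hterm1 k
    have h2 : (∑ j, d j * (w j - g j) ^ 2) < ∑ j, d j * (v j - g j) ^ 2 :=
      Finset.sum_lt_sum (fun j _ => hterm2 j) ⟨i, Finset.mem_univ i, hstrict⟩
    have h3 : α / 2 * ∑ j, d j * (w j - g j) ^ 2 < α / 2 * ∑ j, d j * (v j - g j) ^ 2 :=
      mul_lt_mul_of_pos_left h2 (by linarith)
    linarith
  exact absurd (hv w) (not_le.mpr hlt)
end
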